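/- Define Ĵ_r^+(s) := (2π)^{−s}·Γ(s/2 + ir)·Γ(s/2 − ir)·cos(πs/2), Ĵ_r^−(s) := (2π)^{−s}·Γ(s/2 + ir)·Γ(s/2 − ir)·cosh(πr), and for T > 0 set 𝒢_T^+(w) := Ĵ₀^+(w)·Ĵ_{2T}^−(w) + Ĵ₀^−(w)·Ĵ_{2T}^+(w) and 𝒢_T^−(w) := Ĵ₀^+(w)·Ĵ_{2T}^+(w) + Ĵ₀^−(w)·Ĵ_{2T}^−(w). Fix σ < 1. There exists a constant C > 0 (depending only on σ) such that for all t_g ≥ 1 and all s = σ + iτ: (i) |𝒢_{t_g}^+(1−s)| ≤ C·(1+|τ|)^{−σ}·((1+|τ+4t_g|)·(1+|τ−4t_g|))^{−σ/2}·E⁺, where E⁺ = 1 if |τ| ≤ 4t_g and E⁺ = e^{−(π/2)(|τ|−4t_g)} if |τ| ≥ 4t_g; and (ii) |𝒢_{t_g}^−(1−s)| ≤ C·(1+|τ|)^{−σ}·((1+|τ+4t_g|)·(1+|τ−4t_g|))^{−σ/2}·E⁻, where E⁻ = e^{−(π/2)|τ|} if |τ| ≤ 2t_g, E⁻ = e^{−(π/2)(4t_g−|τ|)}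 if 2t_g ≤ |τ| ≤ 4t_g, and E⁻ = 1 if |τ| ≥ 4t_g. -/

import Mathlib

open Complex Real

/-- The Mellin transform `Ĵ_r^+(s) = (2π)^{-s} Γ(s/2 + ir) Γ(s/2 − ir) cos(πs/2)`. -/
noncomputable def Jhatplus (r s : ℂ) : ℂ :=
  (2 * (π : ℂ)) ^ (-s) * Complex.Gamma (s / 2 + I * r) * Complex.Gamma (s / 2 - I * r) *
    Complex.cos ((π : ℂ) * s / 2)

/-- The Mellin transform `Ĵ_r^−(s) = (2π)^{-s} Γ(s/2 + ir) Γ(s/2 − ir) cosh(πr)`. -/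
noncomputable def Jhatminus (r s : ℂ) : ℂ :=
  (2 * (π : ℂ)) ^ (-s) * Complex.Gamma (s / 2 + I * r) * Complex.Gamma (s / 2 - I * r) *
    Complex.cosh ((π : ℂ) * r)

/-- `𝒢_T^+(w) = Ĵ₀^+(w) Ĵ_{2T}^−(w) + Ĵ₀^−(w) Ĵ_{2T}^+(w)`. -/
noncomputable def Gplus (T : ℝ) (w : ℂ) : ℂ :=
  Jhatplus 0 w * Jhatminus ((2 * T : ℝ) : ℂ) w + Jhatminus 0 w * Jhatplus ((2 * T : ℝ) : ℂ) w

/-- `𝒢_T^−(w) = Ĵ₀^+(w) Ĵ_{2T}^+(w) + Ĵ₀^−(w) Ĵ_{2T}^−(w)`. -/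
noncomputable def Gminus (T : ℝ) (w : ℂ) : ℂ :=
  Jhatplus 0 w * Jhatplus ((2 * T : ℝ) : ℂ) w + Jhatminus 0 w * Jhatminus ((2 * T : ℝ) : ℂ) w

open Finset Filter


lemma abs_Gamma_le_prod (a : ℝ) (ha : 0 < a) (y : ℝ) (n : ℕ) :
    ‖Complex.Gamma ((a : ℂ) + (y : ℂ) * I)‖ ≤
      Real.Gamma a * ∏ k ∈ range (n + 1), ((a + k) / Real.sqrt ((a + k) ^ 2 + y ^ 2)) := by
  set z : ℂ := (a : ℂ) + (y : ℂ) * I with hz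
  have hzre : z.re = a := by simp [hz]
  have hfac : ∀ k : ℕ, ‖z + k‖ = Real.sqrt ((a + k) ^ 2 + y ^ 2) := by
    intro k
    rw [Complex.norm_def, Complex.normSq_apply]
    congr 1
    simp [hz]
    ring
  have hsq_pos : ∀ k : ℕ, 0 < Real.sqrt ((a + k) ^ 2 + y ^ 2) := by
    intro k
    apply Real.sqrt_pos.mpr
    have : 0 < a + (k : ℝ) := by positivity
    positivity
  have hle1 : ∀ k : ℕ, (a + k) / Real.sqrt ((a + k) ^ 2 + y ^ 2) ≤ 1 := by
    intro k
    rw [div_le_one (hsq_pos k)]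
    have h1 : a + (k : ℝ) = Real.sqrt ((a + k) ^ 2) := by
      rw [Real.sqrt_sq]; positivity
    nth_rewrite 1 [h1]
    apply Real.sqrt_le_sqrt
    nlinarith [sq_nonneg y]
  have hfrac_nonneg : ∀ k : ℕ, 0 ≤ (a + k) / Real.sqrt ((a + k) ^ 2 + y ^ 2) := by
    intro k
    have : 0 < a + (k : ℝ) := by positivity
    positivity
  have key : ∀ N : ℕ, n + 1 ≤ N →
      ‖Complex.GammaSeq z N‖ ≤
        Real.GammaSeq a N * ∏ k ∈ range (n + 1), ((a + k) / Real.sqrt ((a + k) ^ 2 + y ^ 2)) := by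
    intro N hN
    have hN0 : 0 < (N : ℝ) := by
      have : 0 < N := by omega
      exact_mod_cast this
    have habs : ‖Complex.GammaSeq z N‖ =
        Real.GammaSeq a N * ∏ k ∈ range (N + 1), ((a + k) / Real.sqrt ((a + k) ^ 2 + y ^ 2)) := by
      rw [Complex.GammaSeq, norm_div, norm_mul, norm_prod]
      have hcast : ((N : ℂ) : ℂ) ^ z = ((N : ℝ) : ℂ) ^ z := by norm_num
      rw [hcast, Complex.norm_cpow_eq_rpow_re_of_pos hN0, hzre]
      simp_rw [hfac]
      have hprodA : (∏ j ∈ range (N + 1), (a + (j : ℝ))) ≠ 0 := by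
        apply ne_of_gt; apply Finset.prod_pos; intro k _; positivity
      have hprodS : (∏ j ∈ range (N + 1), Real.sqrt ((a + j) ^ 2 + y ^ 2)) ≠ 0 := by
        apply ne_of_gt; apply Finset.prod_pos; intro k _; exact hsq_pos k
      rw [Real.GammaSeq, Finset.prod_div_distrib, Complex.norm_natCast]
      field_simp
    calc ‖Complex.GammaSeq z N‖
        = Real.GammaSeq a N * ∏ k ∈ range (N + 1), ((a + k) / Real.sqrt ((a + k) ^ 2 + y ^ 2)) := habs
      _ ≤ Real.GammaSeq a N * ∏ k ∈ range (n + 1), ((a + k) / Real.sqrt ((a + k) ^ 2 + y ^ 2)) := by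
          apply mul_le_mul_of_nonneg_left _ ?_
          · rw [← Finset.prod_range_mul_prod_Ico _ (by omega : n + 1 ≤ N + 1)]
            have h2 : ∏ k ∈ Finset.Ico (n + 1) (N + 1), ((a + k) / Real.sqrt ((a + k) ^ 2 + y ^ 2)) ≤ 1 :=
              Finset.prod_le_one (fun k _ => hfrac_nonneg k) (fun k _ => hle1 k)
            calc (∏ k ∈ range (n + 1), ((a + k) / Real.sqrt ((a + k) ^ 2 + y ^ 2))) *
                  ∏ k ∈ Finset.Ico (n + 1) (N + 1), ((a + k) / Real.sqrt ((a + k) ^ 2 + y ^ 2))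
                ≤ (∏ k ∈ range (n + 1), ((a + k) / Real.sqrt ((a + k) ^ 2 + y ^ 2))) * 1 := by
                  apply mul_le_mul_of_nonneg_left h2
                  exact Finset.prod_nonneg (fun k _ => hfrac_nonneg k)
              _ = _ := mul_one _
          · -- 0 ≤ GammaSeq a N
            rw [Real.GammaSeq]
            have : (0:ℝ) < ∏ j ∈ range (N + 1), (a + (j : ℝ)) := by
              apply Finset.prod_pos; intro k _; positivity
            positivity
  -- now take limits
  have h1 : Filter.Tendsto (fun N => ‖Complex.GammaSeq z N‖) atTop
      (nhds (‖Complex.Gamma z‖)) :=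
    (continuous_norm.tendsto _).comp (Complex.GammaSeq_tendsto_Gamma z)
  have h2 : Filter.Tendsto (fun N => Real.GammaSeq a N *
      ∏ k ∈ range (n + 1), ((a + k) / Real.sqrt ((a + k) ^ 2 + y ^ 2))) atTop
      (nhds (Real.Gamma a * ∏ k ∈ range (n + 1), ((a + k) / Real.sqrt ((a + k) ^ 2 + y ^ 2)))) :=
    (Real.GammaSeq_tendsto_Gamma a).mul_const _
  refine le_of_tendsto_of_tendsto h1 h2 ?_
  filter_upwards [Filter.eventually_ge_atTop (n + 1)] with N hN
  exact key N hN


section core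
variable {y : ℝ} (hy : 0 < y)

/-- `g x = log(1 + y²/x²)` in the form `log(x²+y²) - 2 log x`. -/
noncomputable def gg (y x : ℝ) : ℝ := Real.log (x ^ 2 + y ^ 2) - 2 * Real.log x

/-- `h = -g'`. -/
noncomputable def hh (y x : ℝ) : ℝ := 2 * y ^ 2 / (x * (x ^ 2 + y ^ 2))

/-- antiderivative of `g`. -/
noncomputable def GG (y x : ℝ) : ℝ := x * gg y x + 2 * y * Real.arctan (x / y)

lemma gg_nonneg {x : ℝ} (hx : 0 < x) : 0 ≤ gg y x := by
  unfold gg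
  have h2 : Real.log (x ^ 2) ≤ Real.log (x ^ 2 + y ^ 2) := by
    apply Real.log_le_log (by positivity)
    nlinarith [sq_nonneg y]
  rw [Real.log_pow] at h2
  push_cast at h2
  linarith

lemma hh_nonneg {x : ℝ} (hx : 0 < x) : 0 ≤ hh y x := by
  unfold hh; positivity

include hy in
lemma hh_antitone {x₁ x₂ : ℝ} (h1 : 0 < x₁) (h12 : x₁ ≤ x₂) : hh y x₂ ≤ hh y x₁ := by
  unfold hh
  apply div_le_div_of_nonneg_left (by positivity) (by positivity)
  have h2 : 0 < x₂ := lt_of_lt_of_le h1 h12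
  nlinarith [sq_nonneg y, sq_nonneg (x₁+x₂)]

lemma gg_hasDeriv {x : ℝ} (hx : 0 < x) : HasDerivAt (gg y) (-hh y x) x := by
  have h1 : HasDerivAt (fun x : ℝ => x ^ 2 + y ^ 2) (2 * x) x := by
    simpa using ((hasDerivAt_pow 2 x).add_const (y ^ 2))
  have h2 : HasDerivAt (fun x : ℝ => Real.log (x ^ 2 + y ^ 2)) (2 * x / (x ^ 2 + y ^ 2)) x :=
    h1.log (by positivity)
  have h3 : HasDerivAt (fun x : ℝ => 2 * Real.log x) (2 / x) x := by
    simpa [div_eq_mul_inv] using (Real.hasDerivAt_log hx.ne').const_mul 2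
  have := h2.sub h3
  refine this.congr_deriv ?_
  unfold hh
  field_simp
  ring

include hy in
lemma GG_hasDeriv {x : ℝ} (hx : 0 < x) : HasDerivAt (GG y) (gg y x) x := by
  have h1 : HasDerivAt (fun x => x * gg y x) (1 * gg y x + x * (-hh y x)) x := by
    simpa using (hasDerivAt_id' x).fun_mul (gg_hasDeriv (y := y) hx)
  have h2 : HasDerivAt (fun x : ℝ => x / y) (1 / y) x := (hasDerivAt_id x).div_const y
  have h3 : HasDerivAt (fun x : ℝ => 2 * y * Real.arctan (x / y))
      (2 * y * (1 / (1 + (x / y) ^ 2) * (1 / y))) x := ((h2.arctan).const_mul (2 * y))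
  have := h1.add h3
  refine this.congr_deriv ?_
  unfold hh
  have hy2 : (0:ℝ) < x ^ 2 + y ^ 2 := by positivity
  field_simp
  ring

lemma gg_continuousOn {c d : ℝ} (hc : 0 < c) : ContinuousOn (gg y) (Set.Icc c d) := by
  intro x hx
  have hx0 : 0 < x := lt_of_lt_of_le hc hx.1
  apply ContinuousAt.continuousWithinAt
  have : ContinuousAt (fun x : ℝ => Real.log (x ^ 2 + y ^ 2)) x := by
    apply (Real.continuousAt_log (by positivity)).comp
    fun_prop
  exact this.sub (((Real.continuousAt_log hx0.ne').const_smul (2:ℝ)).congr (by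
    filter_upwards with t
    simp [smul_eq_mul]))

lemma hh_continuousOn {c d : ℝ} (hc : 0 < c) : ContinuousOn (hh y) (Set.Icc c d) := by
  intro x hx
  have hx0 : 0 < x := lt_of_lt_of_le hc hx.1
  apply ContinuousAt.continuousWithinAt
  unfold hh
  apply ContinuousAt.div continuousAt_const
  · fun_prop
  · positivity

end core

section core2
variable {y : ℝ} (hy : 0 < y)

include hy in
lemma gg_integral {c d : ℝ} (hc : 0 < c) (hcd : c ≤ d) :
    ∫ x in c..d, gg y x = GG y d - GG y c := by
  apply intervalIntegral.integral_eq_sub_of_hasDerivAt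
  · intro x hx
    rw [Set.uIcc_of_le hcd] at hx
    exact GG_hasDeriv hy (lt_of_lt_of_le hc hx.1)
  · exact (gg_continuousOn hc).intervalIntegrable_of_Icc hcd

include hy in
lemma hh_integral {c d : ℝ} (hc : 0 < c) (hcd : c ≤ d) :
    ∫ x in c..d, hh y x = gg y c - gg y d := by
  have : ∫ x in c..d, -hh y x = gg y d - gg y c := by
    apply intervalIntegral.integral_eq_sub_of_hasDerivAt
    · intro x hx
      rw [Set.uIcc_of_le hcd] at hx
      exact gg_hasDeriv (lt_of_lt_of_le hc hx.1)
    · exact (((hh_continuousOn hc).neg)).intervalIntegrable_of_Icc hcd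
  rw [intervalIntegral.integral_neg] at this
  linarith

include hy in
lemma gg_chord {c x : ℝ} (hc : 0 < c) (hx1 : c ≤ x) (hx2 : x ≤ c + 1) :
    gg y x ≤ gg y c + (x - c) * (gg y (c + 1) - gg y c) := by
  have hx0 : 0 < x := lt_of_lt_of_le hc hx1
  -- ∫_c^x h ≥ (x-c) h x
  have I1 : (x - c) * hh y x ≤ ∫ t in c..x, hh y t := by
    have : ∫ t in c..x, hh y x = (x - c) * hh y x := by
      simp [intervalIntegral.integral_const, smul_eq_mul]
    rw [← this]
    apply intervalIntegral.integral_mono_on hx1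
    · exact intervalIntegrable_const
    · exact (hh_continuousOn hc).intervalIntegrable_of_Icc hx1
    · intro t ht
      exact hh_antitone hy (lt_of_lt_of_le hc ht.1) ht.2
  have I2 : (∫ t in x..(c + 1), hh y t) ≤ (c + 1 - x) * hh y x := by
    have : ∫ t in x..(c+1), hh y x = (c + 1 - x) * hh y x := by
      simp [intervalIntegral.integral_const, smul_eq_mul]
    rw [← this]
    apply intervalIntegral.integral_mono_on hx2
    · exact (hh_continuousOn hx0).intervalIntegrable_of_Icc hx2
    · exact intervalIntegrable_const
    · intro t ht
      exact hh_antitone hy hx0 ht.1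
  rw [hh_integral hy hc hx1] at I1
  rw [hh_integral hy hx0 hx2] at I2
  have hhx : 0 ≤ hh y x := hh_nonneg hx0
  nlinarith [mul_le_mul_of_nonneg_left I1 (sub_nonneg.mpr hx2),
    mul_le_mul_of_nonneg_left I2 (sub_nonneg.mpr hx1)]

include hy in
lemma gg_trapezoid {c : ℝ} (hc : 0 < c) :
    ∫ x in c..(c + 1), gg y x ≤ (gg y c + gg y (c + 1)) / 2 := by
  have hch : ∫ x in c..(c+1), (gg y c + (x - c) * (gg y (c + 1) - gg y c)) =
      (gg y c + gg y (c + 1)) / 2 := by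
    have : ∀ x ∈ Set.uIcc c (c+1), HasDerivAt
        (fun x => gg y c * x + (x - c) ^ 2 / 2 * (gg y (c + 1) - gg y c))
        (gg y c + (x - c) * (gg y (c + 1) - gg y c)) x := by
      intro x _
      have h1 : HasDerivAt (fun x : ℝ => gg y c * x) (gg y c) x := by
        simpa using (hasDerivAt_id x).const_mul (gg y c)
      have h2 : HasDerivAt (fun x : ℝ => (x - c) ^ 2 / 2) (x - c) x := by
        have := ((hasDerivAt_id x).sub_const c).pow 2
        simpa using this.div_const 2
      exact h1.add (h2.mul_const _)
    rw [intervalIntegral.integral_eq_sub_of_hasDerivAt this (by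
      apply ContinuousOn.intervalIntegrable
      fun_prop)]
    ring
  rw [← hch]
  apply intervalIntegral.integral_mono_on (by linarith)
  · exact (gg_continuousOn hc).intervalIntegrable_of_Icc (by linarith)
  · apply ContinuousOn.intervalIntegrable; fun_prop
  · intro x hx
    exact gg_chord hy hc hx.1 hx.2

include hy in
lemma gg_sum_ge (a : ℝ) (ha : 0 < a) (n : ℕ) :
    GG y (a + n) - GG y a + (gg y a + gg y (a + n)) / 2 ≤
      ∑ k ∈ range (n + 1), gg y (a + k) := by
  induction n with
  | zero => simp
  | succ m ih =>
    rw [Finset.sum_range_succ]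
    have step : GG y (a + (m + 1)) - GG y (a + m) ≤ (gg y (a + m) + gg y (a + (m + 1))) / 2 := by
      have h1 : (0:ℝ) < a + m := by positivity
      calc GG y (a + (m + 1)) - GG y (a + m) = GG y ((a + m) + 1) - GG y (a + m) := by ring_nf
        _ = ∫ x in (a + m)..((a + m) + 1), gg y x := (gg_integral hy h1 (by linarith)).symm
        _ ≤ (gg y (a + m) + gg y ((a + m) + 1)) / 2 := gg_trapezoid hy h1
        _ = (gg y (a + m) + gg y (a + (m + 1))) / 2 := by ring_nf
    push_cast at *
    linarith

end core2

lemma arctan_le_self' {x : ℝ} (hx : 0 ≤ x) : Real.arctan x ≤ x := by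
  calc Real.arctan x ≤ Real.tan (Real.arctan x) :=
        Real.le_tan (by rw [← Real.arctan_zero]; exact Real.arctan_strictMono.monotone hx)
          (Real.arctan_lt_pi_div_two x)
    _ = x := Real.tan_arctan x

set_option maxHeartbeats 1000000 in
lemma gg_sum_lower (a : ℝ) (ha : 0 < a) : ∃ c : ℝ, ∀ y : ℝ, 0 < y →
    π * y + (1 - 2 * a) * Real.log (1 + y) - c ≤
      ∑ k ∈ range (⌈y ^ 2⌉₊ + 1), gg y (a + k) := by
  set K₁ : ℝ := Real.log (2 * max 1 (a ^ 2)) with hK₁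
  set K₂ : ℝ := Real.log (max 1 (a ^ 2)⁻¹) with hK₂
  have hK₁0 : 0 ≤ K₁ := Real.log_nonneg (by
    have : (1:ℝ) ≤ max 1 (a ^ 2) := le_max_left _ _
    linarith)
  have hK₂0 : 0 ≤ K₂ := Real.log_nonneg (le_max_left _ _)
  refine ⟨2 + 2 * a + |1 / 2 - a| * (K₁ + K₂), ?_⟩
  intro y hy
  set n : ℕ := ⌈y ^ 2⌉₊ with hn
  have hM : y ^ 2 ≤ a + n := by
    have := Nat.le_ceil (y ^ 2)
    push_cast at this ⊢
    linarith
  have hM0 : (0:ℝ) < a + n := by positivity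
  have main := gg_sum_ge hy a ha n
  -- lower bound for GG y (a + n)
  have hGM : π * y - 2 ≤ GG y (a + n) := by
    have harc : Real.arctan ((a + n) / y) = π / 2 - Real.arctan (y / (a + n)) := by
      have h1 : (0:ℝ) < y / (a + n) := by positivity
      have := Real.arctan_inv_of_pos h1
      rw [show (a + (n:ℝ)) / y = (y / (a + (n:ℝ)))⁻¹ by rw [inv_div]]
      linarith [this]
    have h2 : Real.arctan (y / (a + n)) ≤ y / (a + n) := arctan_le_self' (by positivity)
    have h3 : y / (a + n) ≤ y / y ^ 2 := by
      apply div_le_div_of_nonneg_left hy.le (by positivity) hM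
    have h4 : y / y ^ 2 = 1 / y := by
      rw [pow_two, div_mul_eq_div_div, div_self hy.ne', one_div]
    have h5 : 0 ≤ (a + n) * gg y (a + n) := by
      exact mul_nonneg hM0.le (gg_nonneg hM0)
    have : GG y (a + n) = (a + n) * gg y (a + n) + 2 * y * Real.arctan ((a + n) / y) := rfl
    rw [this, harc]
    have h6 : 2 * y * (π / 2 - Real.arctan (y / (a + n))) ≥ 2 * y * (π / 2 - 1 / y) := by
      apply mul_le_mul_of_nonneg_left _ (by linarith)
      have := h2.trans (h3.trans_eq h4)
      linarith
    have h7 : 2 * y * (π / 2 - 1 / y) = π * y - 2 := by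
      field_simp
    linarith
  -- upper bound for GG y a
  have hGa : GG y a ≤ a * gg y a + 2 * a := by
    have h1 : Real.arctan (a / y) ≤ a / y := arctan_le_self' (by positivity)
    have : GG y a = a * gg y a + 2 * y * Real.arctan (a / y) := rfl
    rw [this]
    have h2 : 2 * y * Real.arctan (a / y) ≤ 2 * y * (a / y) :=
      mul_le_mul_of_nonneg_left h1 (by linarith)
    have h3 : 2 * y * (a / y) = 2 * a := by
      field_simp
    linarith
  -- bounds on gg y a vs log (1 + y)
  set L : ℝ := Real.log (1 + y) with hL
  have hL0 : 0 ≤ L := Real.log_nonneg (by linarith)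
  have hga_lb : 2 * L - K₁ ≤ gg y a := by
    have h1 : (1 + y) ^ 2 ≤ 2 * max 1 (a ^ 2) * ((a ^ 2 + y ^ 2) / a ^ 2) := by
      have h2 : (1:ℝ) ≤ max 1 (a ^ 2) := le_max_left _ _
      have h3 : a ^ 2 ≤ max 1 (a ^ 2) := le_max_right _ _
      have h4 : (0:ℝ) < a ^ 2 := by positivity
      have hu : a ^ 2 * (a ^ 2)⁻¹ = 1 := mul_inv_cancel₀ h4.ne'
      have hMu : (1:ℝ) ≤ max 1 (a ^ 2) * (a ^ 2)⁻¹ := by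
        calc (1:ℝ) = a ^ 2 * (a ^ 2)⁻¹ := hu.symm
          _ ≤ max 1 (a ^ 2) * (a ^ 2)⁻¹ :=
            mul_le_mul_of_nonneg_right h3 (by positivity)
      have key : (1 + y) ^ 2 ≤ 2 * (1 + y ^ 2) := by nlinarith [sq_nonneg (1 - y)]
      rw [div_eq_mul_inv]
      have e1 : 2 * max 1 (a ^ 2) * ((a ^ 2 + y ^ 2) * (a ^ 2)⁻¹) =
          2 * max 1 (a ^ 2) + 2 * (max 1 (a ^ 2) * (a ^ 2)⁻¹) * y ^ 2 := by
        have : max 1 (a ^ 2) * (a ^ 2 * (a ^ 2)⁻¹) = max 1 (a ^ 2) := by rw [hu, mul_one]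
        nlinarith [this]
      rw [e1]
      nlinarith [sq_nonneg y, mul_le_mul_of_nonneg_right hMu (sq_nonneg y)]
    have h5 : Real.log ((1 + y) ^ 2) ≤ Real.log (2 * max 1 (a ^ 2) * ((a ^ 2 + y ^ 2) / a ^ 2)) :=
      Real.log_le_log (by positivity) h1
    have h6 : Real.log ((1 + y) ^ 2) = 2 * L := by
      rw [hL, Real.log_pow]
      push_cast
      ring
    have h7 : Real.log (2 * max 1 (a ^ 2) * ((a ^ 2 + y ^ 2) / a ^ 2)) = K₁ + gg y a := by
      rw [Real.log_mul (by positivity) (by positivity), hK₁]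
      congr 1
      unfold gg
      rw [Real.log_div (by positivity) (by positivity), Real.log_pow]
      push_cast
      ring
    rw [h6] at h5; rw [h7] at h5
    linarith
  have hga_ub : gg y a ≤ 2 * L + K₂ := by
    have h1 : (a ^ 2 + y ^ 2) / a ^ 2 ≤ max 1 (a ^ 2)⁻¹ * (1 + y) ^ 2 := by
      have h4 : (0:ℝ) < a ^ 2 := by positivity
      have h5 : (a ^ 2)⁻¹ ≤ max 1 (a ^ 2)⁻¹ := le_max_right _ _
      have h6 : (1:ℝ) ≤ max 1 (a ^ 2)⁻¹ := le_max_left _ _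
      have e1 : (a ^ 2 + y ^ 2) / a ^ 2 = 1 + y ^ 2 * (a ^ 2)⁻¹ := by field_simp
      rw [e1]
      have h60 : (0:ℝ) ≤ max 1 (a ^ 2)⁻¹ := le_trans zero_le_one h6
      have e2 : y ^ 2 * (a ^ 2)⁻¹ ≤ y ^ 2 * max 1 (a ^ 2)⁻¹ :=
        mul_le_mul_of_nonneg_left h5 (sq_nonneg y)
      have e3 : (1:ℝ) + y ^ 2 ≤ (1 + y) ^ 2 := by nlinarith [hy.le]
      have e4 : max 1 (a ^ 2)⁻¹ * (1 + y ^ 2) ≤ max 1 (a ^ 2)⁻¹ * (1 + y) ^ 2 :=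
        mul_le_mul_of_nonneg_left e3 h60
      have e5 : 1 + y ^ 2 * max 1 (a ^ 2)⁻¹ ≤ max 1 (a ^ 2)⁻¹ * (1 + y ^ 2) := by nlinarith
      linarith
    have h5 : gg y a ≤ Real.log (max 1 (a ^ 2)⁻¹ * (1 + y) ^ 2) := by
      have e : gg y a = Real.log ((a ^ 2 + y ^ 2) / a ^ 2) := by
        unfold gg
        rw [Real.log_div (by positivity) (by positivity), Real.log_pow]
        push_cast; ring
      rw [e]
      exact Real.log_le_log (by positivity) h1
    have h7 : Real.log (max 1 (a ^ 2)⁻¹ * (1 + y) ^ 2) = K₂ + 2 * L := by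
      rw [Real.log_mul (by positivity) (by positivity), hK₂, Real.log_pow, hL]
      push_cast
      ring
    linarith [h5.trans_eq h7]
  -- combine
  have hcomb : (1 / 2 - a) * gg y a ≥ (1 - 2 * a) * L - |1 / 2 - a| * (K₁ + K₂) := by
    rcases le_total a (1/2) with hc | hc
    · have habs : |1 / 2 - a| = 1 / 2 - a := abs_of_nonneg (by linarith)
      rw [habs]
      nlinarith [mul_le_mul_of_nonneg_left hga_lb (by linarith : (0:ℝ) ≤ 1 / 2 - a)]
    · have habs : |1 / 2 - a| = a - 1 / 2 := by
        rw [abs_of_nonpos (by linarith)]; ring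
      rw [habs]
      nlinarith [mul_le_mul_of_nonneg_left hga_ub (by linarith : (0:ℝ) ≤ a - 1 / 2)]
  have hga0 : 0 ≤ gg y a := gg_nonneg ha
  have hgan0 : 0 ≤ gg y (a + n) := gg_nonneg hM0
  calc π * y + (1 - 2 * a) * L - (2 + 2 * a + |1 / 2 - a| * (K₁ + K₂))
      ≤ π * y + (1 / 2 - a) * gg y a - 2 - 2 * a := by linarith
    _ ≤ GG y (a + n) - GG y a + (gg y a + gg y (a + n)) / 2 := by linarith
    _ ≤ ∑ k ∈ range (n + 1), gg y (a + k) := main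

lemma prod_eq_exp (a : ℝ) (ha : 0 < a) (y : ℝ) (n : ℕ) :
    ∏ k ∈ range (n + 1), ((a + k) / Real.sqrt ((a + k) ^ 2 + y ^ 2)) =
      Real.exp (-(∑ k ∈ range (n + 1), gg y (a + k)) / 2) := by
  have hneg : (-∑ k ∈ range (n + 1), gg y (a + k)) / 2 =
      ∑ k ∈ range (n + 1), (-(gg y (a + k) / 2)) := by
    rw [neg_div, Finset.sum_div]
    rw [Finset.sum_neg_distrib]
  rw [hneg, Real.exp_sum]
  apply Finset.prod_congr rfl
  intro k _
  have hc : (0:ℝ) < a + k := by positivity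
  have hcy : (0:ℝ) < (a + k) ^ 2 + y ^ 2 := by positivity
  unfold gg
  rw [show -((Real.log ((a + (k:ℝ)) ^ 2 + y ^ 2) - 2 * Real.log (a + k)) / 2) =
    Real.log (a + k) - Real.log ((a + (k:ℝ)) ^ 2 + y ^ 2) / 2 by ring]
  rw [Real.exp_sub, Real.exp_log hc]
  congr 1
  rw [← Real.log_sqrt hcy.le, Real.exp_log (Real.sqrt_pos.mpr hcy)]

lemma abs_Gamma_vert (a : ℝ) (ha : 0 < a) : ∃ C : ℝ, 0 < C ∧ ∀ y : ℝ,
    ‖Complex.Gamma ((a : ℂ) + (y : ℂ) * I)‖ ≤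
      C * (1 + |y|) ^ (a - 1 / 2) * Real.exp (-(π / 2) * |y|) := by
  obtain ⟨c, hc⟩ := gg_sum_lower a ha
  have hΓ : 0 < Real.Gamma a := Real.Gamma_pos_of_pos ha
  refine ⟨Real.Gamma a * Real.exp (c / 2) + Real.Gamma a, by positivity, ?_⟩
  -- first prove it for nonneg y
  have key : ∀ y : ℝ, 0 ≤ y →
      ‖Complex.Gamma ((a : ℂ) + (y : ℂ) * I)‖ ≤
        (Real.Gamma a * Real.exp (c / 2) + Real.Gamma a) * (1 + |y|) ^ (a - 1 / 2) *
          Real.exp (-(π / 2) * |y|) := by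
    intro y hy0
    rcases eq_or_lt_of_le hy0 with rfl | hy
    · simp only [abs_zero, Complex.ofReal_zero, zero_mul, add_zero, mul_zero, neg_zero,
        Real.exp_zero, mul_one, Real.one_rpow]
      rw [Complex.Gamma_ofReal]
      rw [Complex.norm_real, Real.norm_eq_abs, abs_of_pos hΓ]
      nlinarith [Real.exp_pos (c / 2)]
    · have habs : |y| = y := abs_of_pos hy
      rw [habs]
      set n : ℕ := ⌈y ^ 2⌉₊ with hn
      calc ‖Complex.Gamma ((a : ℂ) + (y : ℂ) * I)‖
          ≤ Real.Gamma a * ∏ k ∈ range (n + 1), ((a + k) / Real.sqrt ((a + k) ^ 2 + y ^ 2)) :=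
            abs_Gamma_le_prod a ha y n
        _ = Real.Gamma a * Real.exp (-(∑ k ∈ range (n + 1), gg y (a + k)) / 2) := by
            rw [prod_eq_exp a ha y n]
        _ ≤ Real.Gamma a * Real.exp (-(π * y + (1 - 2 * a) * Real.log (1 + y) - c) / 2) := by
            apply mul_le_mul_of_nonneg_left _ hΓ.le
            apply Real.exp_le_exp.mpr
            have := hc y hy
            rw [div_le_div_iff_of_pos_right (by norm_num : (0:ℝ) < 2)]
            linarith
        _ = Real.Gamma a * Real.exp (c / 2) * (1 + y) ^ (a - 1 / 2) *
              Real.exp (-(π / 2) * y) := by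
            rw [Real.rpow_def_of_pos (by linarith : (0:ℝ) < 1 + y)]
            rw [mul_assoc, mul_assoc, ← Real.exp_add, ← Real.exp_add]
            congr 1
            ring
        _ ≤ (Real.Gamma a * Real.exp (c / 2) + Real.Gamma a) * (1 + y) ^ (a - 1 / 2) *
              Real.exp (-(π / 2) * y) := by
            have h1 : (0:ℝ) ≤ (1 + y) ^ (a - 1 / 2) := Real.rpow_nonneg (by linarith) _
            have h2 : (0:ℝ) ≤ Real.exp (-(π / 2) * y) := (Real.exp_pos _).le
            nlinarith [mul_nonneg h1 h2, hΓ.le]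
  intro y
  rcases le_or_gt 0 y with hy0 | hy0
  · exact key y hy0
  · have hconj : ‖Complex.Gamma ((a : ℂ) + (y : ℂ) * I)‖ =
        ‖Complex.Gamma ((a : ℂ) + ((-y : ℝ) : ℂ) * I)‖ := by
      have h1 : ((a : ℂ) + ((-y : ℝ) : ℂ) * I) = starRingEnd ℂ ((a : ℂ) + (y : ℂ) * I) := by
        push_cast
        simp [Complex.ext_iff]
      rw [h1, Complex.Gamma_conj, Complex.norm_conj]
    rw [hconj, show |y| = |-y| by rw [abs_neg]]
    exact key (-y) (by linarith)


lemma abs_cos_le (z : ℂ) : ‖Complex.cos z‖ ≤ Real.exp |z.im| := by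
  rw [Complex.cos]
  calc ‖(Complex.exp (z * I) + Complex.exp (-z * I)) / 2‖
      ≤ (‖Complex.exp (z * I)‖ + ‖Complex.exp (-z * I)‖) / 2 := by
        rw [norm_div]
        simp only [Complex.norm_ofNat]
        gcongr
        exact norm_add_le _ _
    _ ≤ (Real.exp |z.im| + Real.exp |z.im|) / 2 := by
        rw [Complex.norm_exp, Complex.norm_exp]
        have h1 : (z * I).re = -z.im := by simp [Complex.mul_I_re]
        have h2 : (-z * I).re = z.im := by simp [Complex.mul_I_re]
        rw [h1, h2]
        gcongr
        · exact neg_le_abs z.im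
        · exact le_abs_self z.im
    _ = Real.exp |z.im| := by ring

lemma abs_cosh_real (x : ℝ) : ‖Complex.cosh (x : ℂ)‖ ≤ Real.exp |x| := by
  rw [← Complex.ofReal_cosh, Complex.norm_real, Real.norm_eq_abs, abs_of_pos (Real.cosh_pos x)]
  rw [Real.cosh_eq]
  have h1 : Real.exp x ≤ Real.exp |x| := Real.exp_le_exp.mpr (le_abs_self x)
  have h2 : Real.exp (-x) ≤ Real.exp |x| := Real.exp_le_exp.mpr (neg_le_abs x)
  linarith

lemma cmp_rpow (p : ℝ) {b1 b2 : ℝ} (hb1 : 0 < b1) (h12 : b1 ≤ b2) (h21 : b2 ≤ 2 * b1) :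
    b1 ^ p ≤ 2 ^ |p| * b2 ^ p := by
  have hb2 : 0 < b2 := lt_of_lt_of_le hb1 h12
  rcases le_or_gt 0 p with hp | hp
  · rw [_root_.abs_of_nonneg hp]
    calc b1 ^ p ≤ b2 ^ p := Real.rpow_le_rpow hb1.le h12 hp
      _ ≤ 2 ^ p * b2 ^ p := by
        nlinarith [Real.one_le_rpow (by norm_num : (1:ℝ) ≤ 2) hp,
          Real.rpow_pos_of_pos hb2 p]
  · rw [_root_.abs_of_neg hp]
    have key : (2 * b1) ^ p ≤ b2 ^ p := Real.rpow_le_rpow_of_nonpos hb2 h21 hp.le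
    rw [Real.mul_rpow (by norm_num) hb1.le] at key
    have h2p : (0:ℝ) < (2:ℝ) ^ p := Real.rpow_pos_of_pos (by norm_num) p
    have h2np : (2:ℝ) ^ (-p) * (2:ℝ) ^ p = 1 := by
      rw [← Real.rpow_add (by norm_num)]
      simp
    calc b1 ^ p = (2:ℝ) ^ (-p) * ((2:ℝ) ^ p * b1 ^ p) := by
          rw [← mul_assoc, h2np, one_mul]
      _ ≤ (2:ℝ) ^ (-p) * b2 ^ p := by
          apply mul_le_mul_of_nonneg_left key (Real.rpow_nonneg (by norm_num) _)

lemma sum_abs_eq_max {r t : ℝ} (hr : 0 ≤ r) : |r - t / 2| + |-r - t / 2| = max |t| (2 * r) := by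
  rcases le_total |t| (2 * r) with h | h
  · rw [max_eq_right h]
    rw [abs_le] at h
    rw [_root_.abs_of_nonneg (by linarith), _root_.abs_of_nonpos (by linarith)]
    ring
  · rw [max_eq_left h]
    rcases le_total 0 t with ht | ht
    · have h2 : 2 * r ≤ t := by rwa [_root_.abs_of_nonneg ht] at h
      rw [_root_.abs_of_nonpos (by linarith), _root_.abs_of_nonpos (by linarith), _root_.abs_of_nonneg ht]
      ring
    · have h2 : 2 * r ≤ -t := by rwa [_root_.abs_of_nonpos ht] at h
      rw [_root_.abs_of_nonneg (by linarith), _root_.abs_of_nonneg (by linarith), _root_.abs_of_nonpos ht]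
      ring

set_option maxHeartbeats 1600000 in
/-- Uniform bounds for `𝒢_{t_g}^±(1 − s)` on the vertical line `Re s = σ < 1`. -/
theorem stmt_12 (σ : ℝ) (hσ : σ < 1) :
    ∃ C > 0, ∀ tg : ℝ, 1 ≤ tg → ∀ τ : ℝ,
      (‖Gplus tg (1 - ((σ : ℂ) + (τ : ℂ) * I))‖ ≤
        C * (1 + |τ|) ^ (-σ) * ((1 + |τ + 4 * tg|) * (1 + |τ - 4 * tg|)) ^ (-σ / 2) *
          (if |τ| ≤ 4 * tg then 1 else Real.exp (-(π / 2) * (|τ| - 4 * tg)))) ∧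
      (‖Gminus tg (1 - ((σ : ℂ) + (τ : ℂ) * I))‖ ≤
        C * (1 + |τ|) ^ (-σ) * ((1 + |τ + 4 * tg|) * (1 + |τ - 4 * tg|)) ^ (-σ / 2) *
          (if |τ| ≤ 2 * tg then Real.exp (-(π / 2) * |τ|)
            else if |τ| ≤ 4 * tg then Real.exp (-(π / 2) * (4 * tg - |τ|)) else 1)) := by
  
  set a : ℝ := (1 - σ) / 2 with ha_def
  have ha : 0 < a := by simp only [ha_def]; linarith
  obtain ⟨C₁, hC₁, hG⟩ := abs_Gamma_vert a ha
  set D : ℝ := C₁ * 2 ^ |a - 1 / 2| with hD_def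
  have hD : 0 < D := by
    have : (0:ℝ) < 2 ^ |a - 1/2| := Real.rpow_pos_of_pos (by norm_num) _
    positivity
  have hG2 : ∀ u : ℝ, ‖Complex.Gamma ((a : ℂ) + (u : ℂ) * I)‖ ≤
      D * (1 + |2 * u|) ^ (a - 1 / 2) * Real.exp (-(π / 2) * |u|) := by
    intro u
    have h1 := hG u
    have h2 : (1 + |u|) ^ (a - 1 / 2) ≤ 2 ^ |a - 1 / 2| * (1 + |2 * u|) ^ (a - 1 / 2) := by
      apply cmp_rpow
      · positivity
      · rw [abs_mul, _root_.abs_two]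
        nlinarith [abs_nonneg u]
      · rw [abs_mul, _root_.abs_two]
        nlinarith [abs_nonneg u]
    calc ‖Complex.Gamma ((a : ℂ) + (u : ℂ) * I)‖
        ≤ C₁ * (1 + |u|) ^ (a - 1 / 2) * Real.exp (-(π / 2) * |u|) := h1
      _ ≤ C₁ * (2 ^ |a - 1 / 2| * (1 + |2 * u|) ^ (a - 1 / 2)) * Real.exp (-(π / 2) * |u|) :=
          mul_le_mul_of_nonneg_right (mul_le_mul_of_nonneg_left h2 hC₁.le) (Real.exp_pos _).le
      _ = D * (1 + |2 * u|) ^ (a - 1 / 2) * Real.exp (-(π / 2) * |u|) := by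
          rw [hD_def]; ring
  set Kc : ℝ := (2 * π) ^ (σ - 1) * D ^ 2 with hKc_def
  have hKc : 0 < Kc := by
    have h1 : (0:ℝ) < (2 * π) ^ (σ - 1) := Real.rpow_pos_of_pos (by positivity) _
    positivity
  refine ⟨2 * Kc ^ 2, by positivity, ?_⟩
  intro tg htg τ
  have htg0 : (0:ℝ) < tg := by linarith
  set w : ℂ := 1 - ((σ : ℂ) + (τ : ℂ) * I) with hw_def
  -- abs of the power factor
  have habsA : ‖(2 * (π : ℂ)) ^ (-w)‖ = (2 * π) ^ (σ - 1) := by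
    have h2pi : (2 * (π : ℂ)) = ((2 * π : ℝ) : ℂ) := by push_cast; ring
    have hre : (-w).re = σ - 1 := by
      simp [hw_def]
    rw [h2pi, Complex.norm_cpow_eq_rpow_re_of_pos (by positivity), hre]
  -- cos factor
  have hcos : ‖Complex.cos ((π : ℂ) * w / 2)‖ ≤ Real.exp (π / 2 * |τ|) := by
    refine (abs_cos_le _).trans ?_
    apply Real.exp_le_exp.mpr
    have him : ((π : ℂ) * w / 2).im = -(π * τ) / 2 := by
      simp [hw_def]
    rw [him, abs_div, abs_neg, abs_mul, _root_.abs_of_pos Real.pi_pos,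
      _root_.abs_of_pos (by norm_num : (0:ℝ) < 2)]
    exact le_of_eq (by ring)
  -- the generic J bound
  have key_J : ∀ (r : ℝ) (F : ℂ) (e3 : ℝ), ‖F‖ ≤ Real.exp e3 →
      ‖(2 * (π : ℂ)) ^ (-w) * Complex.Gamma (w / 2 + I * (r : ℂ)) *
          Complex.Gamma (w / 2 - I * (r : ℂ)) * F‖ ≤
        Kc * ((1 + |2 * (r - τ / 2)|) * (1 + |2 * (-r - τ / 2)|)) ^ (a - 1 / 2) *
          Real.exp (-(π / 2) * (|r - τ / 2| + |-r - τ / 2|) + e3) := by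
    intro r F e3 hF
    have hargp : w / 2 + I * (r : ℂ) = (a : ℂ) + ((r - τ / 2 : ℝ) : ℂ) * I := by
      simp only [ha_def, hw_def]
      push_cast
      ring
    have hargm : w / 2 - I * (r : ℂ) = (a : ℂ) + ((-r - τ / 2 : ℝ) : ℂ) * I := by
      simp only [ha_def, hw_def]
      push_cast
      ring
    rw [norm_mul, norm_mul, norm_mul, habsA, hargp, hargm]
    have g1 := hG2 (r - τ / 2)
    have g2 := hG2 (-r - τ / 2)
    have hb1 : (0:ℝ) < 1 + |2 * (r - τ / 2)| := by positivity
    have hb2 : (0:ℝ) < 1 + |2 * (-r - τ / 2)| := by positivity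
    calc (2 * π) ^ (σ - 1) * ‖Complex.Gamma ((a : ℂ) + ((r - τ / 2 : ℝ) : ℂ) * I)‖ *
          ‖Complex.Gamma ((a : ℂ) + ((-r - τ / 2 : ℝ) : ℂ) * I)‖ * ‖F‖
        ≤ (2 * π) ^ (σ - 1) *
            (D * (1 + |2 * (r - τ / 2)|) ^ (a - 1 / 2) * Real.exp (-(π / 2) * |r - τ / 2|)) *
            (D * (1 + |2 * (-r - τ / 2)|) ^ (a - 1 / 2) * Real.exp (-(π / 2) * |-r - τ / 2|)) *
            Real.exp e3 := by
          have hp1 : (0:ℝ) < (2 * π) ^ (σ - 1) := Real.rpow_pos_of_pos (by positivity) _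
          gcongr
      _ = Kc * ((1 + |2 * (r - τ / 2)|) * (1 + |2 * (-r - τ / 2)|)) ^ (a - 1 / 2) *
            Real.exp (-(π / 2) * (|r - τ / 2| + |-r - τ / 2|) + e3) := by
          rw [Real.mul_rpow hb1.le hb2.le,
            show -(π / 2) * (|r - τ / 2| + |-r - τ / 2|) + e3 =
              -(π / 2) * |r - τ / 2| + (-(π / 2) * |-r - τ / 2| + e3) by ring,
            Real.exp_add, Real.exp_add, hKc_def]
          ring
  -- abbreviations
  set m : ℝ := max |τ| (4 * tg) with hm_def
  set P0 : ℝ := (1 + |τ|) ^ (-σ) with hP0_def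
  set PT : ℝ := ((1 + |τ + 4 * tg|) * (1 + |τ - 4 * tg|)) ^ (-σ / 2) with hPT_def
  have h1τ : (0:ℝ) < 1 + |τ| := by positivity
  have hP0 : 0 < P0 := Real.rpow_pos_of_pos h1τ _
  have hPT : 0 < PT := by
    apply Real.rpow_pos_of_pos
    have : (0:ℝ) < 1 + |τ + 4 * tg| := by positivity
    have : (0:ℝ) < 1 + |τ - 4 * tg| := by positivity
    positivity
  have hbase0 : ((1 + |τ|) * (1 + |τ|)) ^ (a - 1 / 2) = P0 := by
    rw [Real.mul_rpow h1τ.le h1τ.le, ← Real.rpow_add h1τ, hP0_def]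
    congr 1
    simp only [ha_def]
    ring
  have habs_half : |τ / 2| = |τ| / 2 := by
    rw [abs_div, _root_.abs_two]
  -- the four J-bounds
  have hJ0p : ‖Jhatplus 0 w‖ ≤
      Kc * P0 * Real.exp (-(π / 2) * |τ| + π / 2 * |τ|) := by
    have h := key_J 0 (Complex.cos ((π : ℂ) * w / 2)) (π / 2 * |τ|) hcos
    rw [show (0:ℝ) - τ / 2 = -(τ / 2) by ring, show -(0:ℝ) - τ / 2 = -(τ / 2) by ring,
      show (2:ℝ) * -(τ / 2) = -τ by ring, abs_neg, abs_neg, hbase0, habs_half,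
      show |τ| / 2 + |τ| / 2 = |τ| by ring] at h
    have he : Jhatplus 0 w = (2 * (π : ℂ)) ^ (-w) * Complex.Gamma (w / 2 + I * ((0:ℝ) : ℂ)) *
        Complex.Gamma (w / 2 - I * ((0:ℝ) : ℂ)) * Complex.cos ((π : ℂ) * w / 2) := by
      rw [Jhatplus]
      norm_num
    rw [he]
    exact h
  have hJ0m : ‖Jhatminus 0 w‖ ≤
      Kc * P0 * Real.exp (-(π / 2) * |τ| + 0) := by
    have hF : ‖Complex.cosh ((π : ℂ) * 0)‖ ≤ Real.exp 0 := by
      norm_num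
    have h := key_J 0 (Complex.cosh ((π : ℂ) * 0)) 0 hF
    rw [show (0:ℝ) - τ / 2 = -(τ / 2) by ring, show -(0:ℝ) - τ / 2 = -(τ / 2) by ring,
      show (2:ℝ) * -(τ / 2) = -τ by ring, abs_neg, abs_neg, hbase0, habs_half,
      show |τ| / 2 + |τ| / 2 = |τ| by ring] at h
    have he : Jhatminus 0 w = (2 * (π : ℂ)) ^ (-w) * Complex.Gamma (w / 2 + I * ((0:ℝ) : ℂ)) *
        Complex.Gamma (w / 2 - I * ((0:ℝ) : ℂ)) * Complex.cosh ((π : ℂ) * 0) := by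
      rw [Jhatminus]
      norm_num
    rw [he]
    exact h
  have hbaseT : ((1 + |2 * (2 * tg - τ / 2)|) * (1 + |2 * (-(2 * tg) - τ / 2)|)) ^ (a - 1 / 2)
      = PT := by
    rw [show 2 * (2 * tg - τ / 2) = -(τ - 4 * tg) by ring,
      show 2 * (-(2 * tg) - τ / 2) = -(τ + 4 * tg) by ring, abs_neg, abs_neg, hPT_def]
    rw [show (1 + |τ - 4 * tg|) * (1 + |τ + 4 * tg|) =
      (1 + |τ + 4 * tg|) * (1 + |τ - 4 * tg|) by ring]
    congr 1
    simp only [ha_def]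
    ring
  have hexpT : |2 * tg - τ / 2| + |-(2 * tg) - τ / 2| = m := by
    have h := sum_abs_eq_max (t := τ) (r := 2 * tg) (by linarith)
    rw [show 2 * (2 * tg) = 4 * tg by ring] at h
    rw [h, hm_def]
  have hJTp : ‖Jhatplus ((2 * tg : ℝ) : ℂ) w‖ ≤
      Kc * PT * Real.exp (-(π / 2) * m + π / 2 * |τ|) := by
    have h := key_J (2 * tg) (Complex.cos ((π : ℂ) * w / 2)) (π / 2 * |τ|) hcos
    rw [show -(2 * tg) - τ / 2 = -(2 * tg) - τ / 2 by ring] at h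
    rw [hbaseT, hexpT] at h
    have he : Jhatplus ((2 * tg : ℝ) : ℂ) w = (2 * (π : ℂ)) ^ (-w) *
        Complex.Gamma (w / 2 + I * ((2 * tg : ℝ) : ℂ)) *
        Complex.Gamma (w / 2 - I * ((2 * tg : ℝ) : ℂ)) * Complex.cos ((π : ℂ) * w / 2) := rfl
    rw [he]
    exact h
  have hJTm : ‖Jhatminus ((2 * tg : ℝ) : ℂ) w‖ ≤
      Kc * PT * Real.exp (-(π / 2) * m + π * (2 * tg)) := by
    have hF : ‖Complex.cosh ((π : ℂ) * ((2 * tg : ℝ) : ℂ))‖ ≤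
        Real.exp (π * (2 * tg)) := by
      have hc : (π : ℂ) * ((2 * tg : ℝ) : ℂ) = ((π * (2 * tg) : ℝ) : ℂ) := by push_cast; ring
      rw [hc]
      refine (abs_cosh_real _).trans ?_
      apply Real.exp_le_exp.mpr
      rw [_root_.abs_of_nonneg (by positivity)]
    have h := key_J (2 * tg) (Complex.cosh ((π : ℂ) * ((2 * tg : ℝ) : ℂ))) (π * (2 * tg)) hF
    rw [hbaseT, hexpT] at h
    exact h
  -- multiplication helper
  have habs_mul : ∀ (x y : ℂ) (X Y : ℝ), ‖x‖ ≤ X → ‖y‖ ≤ Y →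
      ‖x * y‖ ≤ X * Y := by
    intro x y X Y hx hy
    rw [norm_mul]
    exact mul_le_mul hx hy (norm_nonneg y) ((norm_nonneg x).trans hx)
  have hKPP : (0:ℝ) < Kc ^ 2 * P0 * PT := by
    have := pow_pos hKc 2
    exact mul_pos (mul_pos this hP0) hPT
  constructor
  · -- Gplus
    set Ep : ℝ := if |τ| ≤ 4 * tg then (1:ℝ) else Real.exp (-(π / 2) * (|τ| - 4 * tg)) with hEp_def
    have hcase1 : Real.exp (-(π / 2) * |τ| + π / 2 * |τ|) *
        Real.exp (-(π / 2) * m + π * (2 * tg)) ≤ Ep := by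
      rw [← Real.exp_add, hEp_def]
      split_ifs with hc
      · rw [hm_def, max_eq_right hc]
        apply Real.exp_le_one_iff.mpr
        nlinarith [Real.pi_pos]
      · push_neg at hc
        rw [hm_def, max_eq_left hc.le]
        apply Real.exp_le_exp.mpr
        nlinarith [Real.pi_pos]
    have hcase2 : Real.exp (-(π / 2) * |τ| + 0) *
        Real.exp (-(π / 2) * m + π / 2 * |τ|) ≤ Ep := by
      rw [← Real.exp_add, hEp_def]
      split_ifs with hc
      · rw [hm_def, max_eq_right hc]
        apply Real.exp_le_one_iff.mpr
        nlinarith [Real.pi_pos, abs_nonneg τ]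
      · push_neg at hc
        rw [hm_def, max_eq_left hc.le]
        apply Real.exp_le_exp.mpr
        nlinarith [Real.pi_pos]
    calc ‖Gplus tg w‖
        ≤ ‖Jhatplus 0 w * Jhatminus ((2 * tg : ℝ) : ℂ) w‖ +
          ‖Jhatminus 0 w * Jhatplus ((2 * tg : ℝ) : ℂ) w‖ := by
          rw [Gplus]
          exact norm_add_le _ _
      _ ≤ (Kc * P0 * Real.exp (-(π / 2) * |τ| + π / 2 * |τ|)) *
            (Kc * PT * Real.exp (-(π / 2) * m + π * (2 * tg))) +
          (Kc * P0 * Real.exp (-(π / 2) * |τ| + 0)) *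
            (Kc * PT * Real.exp (-(π / 2) * m + π / 2 * |τ|)) := by
          have u1 := habs_mul _ _ _ _ hJ0p hJTm
          have u2 := habs_mul _ _ _ _ hJ0m hJTp
          linarith
      _ = (Kc ^ 2 * P0 * PT) * (Real.exp (-(π / 2) * |τ| + π / 2 * |τ|) *
            Real.exp (-(π / 2) * m + π * (2 * tg))) +
          (Kc ^ 2 * P0 * PT) * (Real.exp (-(π / 2) * |τ| + 0) *
            Real.exp (-(π / 2) * m + π / 2 * |τ|)) := by ring
      _ ≤ (Kc ^ 2 * P0 * PT) * Ep + (Kc ^ 2 * P0 * PT) * Ep := by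
          have v1 := mul_le_mul_of_nonneg_left hcase1 hKPP.le
          have v2 := mul_le_mul_of_nonneg_left hcase2 hKPP.le
          linarith
      _ = 2 * Kc ^ 2 * P0 * PT * Ep := by ring
  · -- Gminus
    set Em : ℝ := if |τ| ≤ 2 * tg then Real.exp (-(π / 2) * |τ|)
      else if |τ| ≤ 4 * tg then Real.exp (-(π / 2) * (4 * tg - |τ|)) else (1:ℝ) with hEm_def
    have hcase1 : Real.exp (-(π / 2) * |τ| + π / 2 * |τ|) *
        Real.exp (-(π / 2) * m + π / 2 * |τ|) ≤ Em := by
      rw [← Real.exp_add, hEm_def]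
      split_ifs with hc1 hc2
      · rw [hm_def, max_eq_right (by linarith : |τ| ≤ 4 * tg)]
        apply Real.exp_le_exp.mpr
        nlinarith [Real.pi_pos]
      · rw [hm_def, max_eq_right hc2]
        apply Real.exp_le_exp.mpr
        nlinarith [Real.pi_pos]
      · push_neg at hc1 hc2
        rw [hm_def, max_eq_left hc2.le]
        apply Real.exp_le_one_iff.mpr
        nlinarith [Real.pi_pos]
    have hcase2 : Real.exp (-(π / 2) * |τ| + 0) *
        Real.exp (-(π / 2) * m + π * (2 * tg)) ≤ Em := by
      rw [← Real.exp_add, hEm_def]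
      split_ifs with hc1 hc2
      · rw [hm_def, max_eq_right (by linarith : |τ| ≤ 4 * tg)]
        apply Real.exp_le_exp.mpr
        nlinarith [Real.pi_pos]
      · push_neg at hc1
        rw [hm_def, max_eq_right hc2]
        apply Real.exp_le_exp.mpr
        nlinarith [Real.pi_pos]
      · push_neg at hc1 hc2
        rw [hm_def, max_eq_left hc2.le]
        apply Real.exp_le_one_iff.mpr
        nlinarith [Real.pi_pos]
    calc ‖Gminus tg w‖
        ≤ ‖Jhatplus 0 w * Jhatplus ((2 * tg : ℝ) : ℂ) w‖ +
          ‖Jhatminus 0 w * Jhatminus ((2 * tg : ℝ) : ℂ) w‖ := by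
          rw [Gminus]
          exact norm_add_le _ _
      _ ≤ (Kc * P0 * Real.exp (-(π / 2) * |τ| + π / 2 * |τ|)) *
            (Kc * PT * Real.exp (-(π / 2) * m + π / 2 * |τ|)) +
          (Kc * P0 * Real.exp (-(π / 2) * |τ| + 0)) *
            (Kc * PT * Real.exp (-(π / 2) * m + π * (2 * tg))) := by
          have u1 := habs_mul _ _ _ _ hJ0p hJTp
          have u2 := habs_mul _ _ _ _ hJ0m hJTm
          linarith
      _ = (Kc ^ 2 * P0 * PT) * (Real.exp (-(π / 2) * |τ| + π / 2 * |τ|) *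
            Real.exp (-(π / 2) * m + π / 2 * |τ|)) +
          (Kc ^ 2 * P0 * PT) * (Real.exp (-(π / 2) * |τ| + 0) *
            Real.exp (-(π / 2) * m + π * (2 * tg))) := by ring
      _ ≤ (Kc ^ 2 * P0 * PT) * Em + (Kc ^ 2 * P0 * PT) * Em := by
          have v1 := mul_le_mul_of_nonneg_left hcase1 hKPP.le
          have v2 := mul_le_mul_of_nonneg_left hcase2 hKPP.le
          linarith
      _ = 2 * Kc ^ 2 * P0 * PT * Em := by ring
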